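/- Let Π : h → h be an orthogonal projection with range h₀, Θ : D(Θ) ⊆ h₀ → h₀ self-adjoint, and Γ_{z,Π,Θ} := Θ + Π Γ_z Π on D(Θ). Then every non-real complex number z ∈ ρ(A₀) satisfies 0 ∈ ρ(Γ_{z,Π,Θ}); in particular the set Z_{Π,Θ} := {z ∈ ρ(A₀) : 0 ∈ ρ(Γ_{z,Π,Θ})} contains ℂ ∖ ℝ. -/

import Mathlib

/- Abstract Krein framework (Posilicano): the self-adjoint operator A₀ on the
Hilbert space H is modeled by its domain `D`, its action `A`, its resolvent set
`ρA` and its resolvent family `R z = (-A₀+z)⁻¹`; `τ : 𝒟(A₀) → h` is bounded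
w.r.t. the graph norm; `G z = (τ R_z̄)*` is characterized by the adjoint identity. -/

local notation "⟪" x ", " y "⟫" => @inner ℂ _ _ x y

set_option maxHeartbeats 1600000 in
/-- for `Pr` an orthogonal projection with range `h₀`, `Θ` a
self-adjoint operator in `h₀` and `Γ_{z,Pr,Θ} := Θ + Pr Γ_z Pr`, every non-real
`z` (which automatically lies in `ρ(A₀)`) satisfies `0 ∈ ρ(Γ_{z,Pr,Θ})`, i.e.
`ℂ ∖ ℝ ⊆ Z_{Pr,Θ}`. -/
theorem krein_nonreal_subset_Z
    {H h : Type*}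
    [NormedAddCommGroup H] [InnerProductSpace ℂ H] [CompleteSpace H]
    [NormedAddCommGroup h] [InnerProductSpace ℂ h] [CompleteSpace h]
    (D : Submodule ℂ H) (hDdense : Dense (D : Set H))
    (A : D →ₗ[ℂ] H)
    (hsym : ∀ x y : D, ⟪A x, (y : H)⟫ = ⟪(x : H), A y⟫)
    (ρA : Set ℂ)
    (hρconj : ∀ z ∈ ρA, (starRingEnd ℂ) z ∈ ρA)
    (R : ℂ → H →L[ℂ] H)
    (hmem : ∀ z, z ∈ ρA → ∀ y : H, R z y ∈ D)
    (hres1 : ∀ z (hz : z ∈ ρA) (y : H), z • R z y - A ⟨R z y, hmem z hz y⟩ = y)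
    (hres2 : ∀ z ∈ ρA, ∀ x : D, R z (z • (x : H) - A x) = (x : H))
    (hRadj : ∀ z ∈ ρA, ContinuousLinearMap.adjoint (R z) = R ((starRingEnd ℂ) z))
    (τ : D →ₗ[ℂ] h) (C : ℝ)
    (hτ : ∀ x : D, ‖τ x‖ ≤ C * (‖(x : H)‖ + ‖A x‖))
    (G : ℂ → h →L[ℂ] H)
    (hG : ∀ z (hz : z ∈ ρA) (ζ : h) (y : H),
      ⟪G z ζ, y⟫ = ⟪ζ, τ ⟨R ((starRingEnd ℂ) z) y, hmem _ (hρconj z hz) y⟩⟫)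
    (hτsurj : Function.Surjective τ)
    (hker : Dense ((fun x : D => (x : H)) '' {x : D | τ x = 0}))
    (h0 : (0 : ℂ) ∈ ρA)
    (hsub : ∀ z (hz : z ∈ ρA) (ζ : h), G 0 ζ - G z ζ ∈ D)
    (Γ : ℂ → h →L[ℂ] h)
    (hΓ : ∀ z (hz : z ∈ ρA) (ζ : h), Γ z ζ = τ ⟨G 0 ζ - G z ζ, hsub z hz ζ⟩)
    (Pr : h →L[ℂ] h) (hPrproj : Pr.comp Pr = Pr) (hPrsa : IsSelfAdjoint Pr)
    (DΘ : Submodule ℂ h) (hDΘ : (DΘ : Set h) ⊆ Set.range ⇑Pr)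
    (hDΘdense : Set.range ⇑Pr ⊆ closure (DΘ : Set h))
    (Θ : DΘ →ₗ[ℂ] h)
    (hΘran : ∀ x : DΘ, Θ x ∈ Set.range ⇑Pr)
    (hΘsym : ∀ x y : DΘ, ⟪Θ x, (y : h)⟫ = ⟪(x : h), Θ y⟫)
    (hΘsa : ∀ ζ η : h, ζ ∈ Set.range ⇑Pr → η ∈ Set.range ⇑Pr →
      (∀ x : DΘ, ⟪ζ, Θ x⟫ = ⟪η, (x : h)⟫) → ζ ∈ DΘ)
    (hρ : ∀ z : ℂ, z.im ≠ 0 → z ∈ ρA) :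
    ∀ z : ℂ, z.im ≠ 0 →
      ∃ (B : h →L[ℂ] h) (hB : ∀ ζ : h, B ζ ∈ DΘ),
        (∀ ζ ∈ Set.range ⇑Pr, Θ ⟨B ζ, hB ζ⟩ + Pr (Γ z (Pr (B ζ))) = ζ) ∧
        ∀ x : DΘ, B (Θ x + Pr (Γ z (Pr (x : h)))) = (x : h) := by
  intro z hz
  classical
  have hz' : z ∈ ρA := hρ z hz
  have hzc' : (starRingEnd ℂ) z ∈ ρA := hρconj z hz'
  have hzcim : ((starRingEnd ℂ) z).im ≠ 0 := by
    rw [Complex.conj_im]; exact neg_ne_zero.mpr hz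
  have hc0 : (starRingEnd ℂ) (0 : ℂ) = 0 := map_zero _
  have hτcongr : ∀ a b : D, (a : H) = (b : H) → τ a = τ b := fun a b hab =>
    congrArg τ (Subtype.ext hab)
  have hAcongr : ∀ a b : D, (a : H) = (b : H) → A a = A b := fun a b hab =>
    congrArg A (Subtype.ext hab)
  -- A (R 0 y) = -y
  have hA0 : ∀ y : H, A ⟨R 0 y, hmem 0 h0 y⟩ = -y := by
    intro y
    have h1 := hres1 0 h0 y
    rw [zero_smul, zero_sub] at h1
    exact neg_eq_iff_eq_neg.mp h1
  -- A (R w y) = w • R w y - y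
  have hAR : ∀ w (hw : w ∈ ρA) (y : H), A ⟨R w y, hmem w hw y⟩ = w • R w y - y := by
    intro w hw y
    have h1 := hres1 w hw y
    rw [sub_eq_iff_eq_add.mp h1]
    abel
  -- R 0 is self-adjoint
  have hR0sym : ∀ u v : H, ⟪R 0 u, v⟫ = ⟪u, R 0 v⟫ := by
    intro u v
    have h1 := ContinuousLinearMap.adjoint_inner_left (R 0) v u
    rw [hRadj 0 h0, hc0] at h1
    exact h1
  -- key identity: G 0 ζ - G w ζ = w • R 0 (G w ζ)
  have hx : ∀ w, w ∈ ρA → ∀ ζ : h, G 0 ζ - G w ζ = w • R 0 (G w ζ) := by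
    intro w hw ζ
    have hwc : (starRingEnd ℂ) w ∈ ρA := hρconj w hw
    apply ext_inner_right ℂ
    intro v
    have e0 : ⟪G 0 ζ, v⟫ = ⟪ζ, (τ ⟨R 0 v, hmem 0 h0 v⟩ : h)⟫ := by
      rw [hG 0 h0 ζ v]
      congr 1
      apply hτcongr
      show R ((starRingEnd ℂ) 0) v = R 0 v
      rw [hc0]
    have hsplit : (⟨R 0 v, hmem 0 h0 v⟩ : D) - ⟨R ((starRingEnd ℂ) w) v, hmem _ hwc v⟩
        = (starRingEnd ℂ) w • (⟨R ((starRingEnd ℂ) w) (R 0 v), hmem _ hwc _⟩ : D) := by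
      apply Subtype.ext
      set a : D := ⟨R 0 v, hmem 0 h0 v⟩ with ha
      set b : D := ⟨R ((starRingEnd ℂ) w) v, hmem _ hwc v⟩ with hb
      have hAa : A a = -v := hA0 v
      have hAb : A b = (starRingEnd ℂ) w • R ((starRingEnd ℂ) w) v - v := hAR _ hwc v
      have key : (starRingEnd ℂ) w • ((a - b : D) : H) - A (a - b)
          = (starRingEnd ℂ) w • R 0 v := by
        rw [map_sub, hAa, hAb]
        have hca : ((a : D) : H) = R 0 v := rfl
        have hcb2 : ((b : D) : H) = R ((starRingEnd ℂ) w) v := rfl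
        rw [AddSubgroupClass.coe_sub, hca, hcb2]
        module
      have h2 := hres2 ((starRingEnd ℂ) w) hwc (a - b)
      rw [key] at h2
      have h3 : R ((starRingEnd ℂ) w) ((starRingEnd ℂ) w • R 0 v)
          = (starRingEnd ℂ) w • R ((starRingEnd ℂ) w) (R 0 v) := map_smul _ _ _
      rw [h3] at h2
      show ((a - b : D) : H) = (starRingEnd ℂ) w • R ((starRingEnd ℂ) w) (R 0 v)
      exact h2.symm
    calc ⟪G 0 ζ - G w ζ, v⟫
        = ⟪G 0 ζ, v⟫ - ⟪G w ζ, v⟫ := inner_sub_left _ _ _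
      _ = ⟪ζ, (τ ⟨R 0 v, hmem 0 h0 v⟩ : h)⟫
          - ⟪ζ, (τ ⟨R ((starRingEnd ℂ) w) v, hmem _ hwc v⟩ : h)⟫ := by
          rw [e0, hG w hw ζ v]
      _ = ⟪ζ, (τ ((⟨R 0 v, hmem 0 h0 v⟩ : D) - ⟨R ((starRingEnd ℂ) w) v, hmem _ hwc v⟩) : h)⟫ := by
          rw [map_sub, inner_sub_right]
      _ = ⟪ζ, (τ ((starRingEnd ℂ) w • (⟨R ((starRingEnd ℂ) w) (R 0 v), hmem _ hwc _⟩ : D)) : h)⟫ := by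
          rw [hsplit]
      _ = (starRingEnd ℂ) w * ⟪ζ, (τ (⟨R ((starRingEnd ℂ) w) (R 0 v), hmem _ hwc _⟩ : D) : h)⟫ := by
          rw [map_smul, inner_smul_right]
      _ = (starRingEnd ℂ) w * ⟪G w ζ, R 0 v⟫ := by rw [← hG w hw ζ (R 0 v)]
      _ = (starRingEnd ℂ) w * ⟪R 0 (G w ζ), v⟫ := by rw [hR0sym]
      _ = ⟪w • R 0 (G w ζ), v⟫ := (inner_smul_left _ _ _).symm
  -- τ inner identity
  have hτinner : ∀ w, w ∈ ρA → ∀ (x : D) (η : h),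
      ⟪η, (τ x : h)⟫ = ⟪G w η, (starRingEnd ℂ) w • (x : H) - A x⟫ := by
    intro w hw x η
    have hwc : (starRingEnd ℂ) w ∈ ρA := hρconj w hw
    rw [hG w hw η ((starRingEnd ℂ) w • (x : H) - A x)]
    congr 1
    exact hτcongr _ _ (hres2 _ hwc x).symm
  -- A of the difference element
  have hAxd : ∀ w (hw : w ∈ ρA) (ζ : h),
      A ⟨G 0 ζ - G w ζ, hsub w hw ζ⟩ = -(w • G w ζ) := by
    intro w hw ζ
    have h1 : A ⟨G 0 ζ - G w ζ, hsub w hw ζ⟩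
        = A (w • (⟨R 0 (G w ζ), hmem 0 h0 _⟩ : D)) :=
      hAcongr _ _ (by
        show G 0 ζ - G w ζ = ((w • (⟨R 0 (G w ζ), hmem 0 h0 _⟩ : D) : D) : H)
        rw [hx w hw ζ]; rfl)
    rw [h1, map_smul, hA0, smul_neg]
  have hxval : ∀ w (hw : w ∈ ρA) (ζ : h),
      ((⟨G 0 ζ - G w ζ, hsub w hw ζ⟩ : D) : H) = w • R 0 (G w ζ) := fun w hw ζ => hx w hw ζ
  -- quadratic form of Γ
  have hΓself : ∀ w, w ∈ ρA → ∀ ζ : h,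
      ⟪ζ, Γ w ζ⟫ = ((starRingEnd ℂ) w * w) * ⟪G w ζ, R 0 (G w ζ)⟫
        + w * ⟪G w ζ, G w ζ⟫ := by
    intro w hw ζ
    rw [hΓ w hw ζ, hτinner w hw _ ζ, hAxd w hw ζ, hxval w hw ζ, sub_neg_eq_add,
      inner_add_right, inner_smul_right, inner_smul_right, inner_smul_right]
    ring
  -- imaginary part
  have hΓim : ∀ w, w ∈ ρA → ∀ ζ : h, (⟪ζ, Γ w ζ⟫).im = w.im * ‖G w ζ‖ ^ 2 := by
    intro w hw ζ
    rw [hΓself w hw ζ]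
    have hr : ((starRingEnd ℂ) ⟪G w ζ, R 0 (G w ζ)⟫) = ⟪G w ζ, R 0 (G w ζ)⟫ := by
      rw [inner_conj_symm, hR0sym]
    have hrim : (⟪G w ζ, R 0 (G w ζ)⟫).im = 0 := Complex.conj_eq_iff_im.mp hr
    have hsim : (⟪G w ζ, G w ζ⟫ : ℂ).im = 0 :=
      Complex.conj_eq_iff_im.mp (inner_conj_symm _ _)
    have hsre : (⟪G w ζ, G w ζ⟫ : ℂ).re = ‖G w ζ‖ ^ 2 := by
      have h2 := inner_self_eq_norm_sq (𝕜 := ℂ) (G w ζ)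
      simpa using h2
    have h1 : ((starRingEnd ℂ) w * w) = ((Complex.normSq w : ℝ) : ℂ) :=
      Complex.normSq_eq_conj_mul_self.symm
    rw [h1, Complex.add_im, Complex.mul_im, Complex.mul_im]
    simp [hrim, hsim, hsre, Complex.ofReal_re, Complex.ofReal_im]
    rw [← Complex.ofReal_pow, Complex.ofReal_im, Complex.ofReal_re]; ring
  -- adjoint formulas
  have hΓadjL : ∀ w, w ∈ ρA → ∀ ζ η : h, ⟪η, Γ w ζ⟫ = w * ⟪G 0 η, G w ζ⟫ := by
    intro w hw ζ η
    rw [hΓ w hw ζ, hτinner 0 h0 _ η, hAxd w hw ζ, hc0]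
    rw [zero_smul, zero_sub, neg_neg, inner_smul_right]
  have hΓadjR : ∀ w (hw : w ∈ ρA) (hwc : (starRingEnd ℂ) w ∈ ρA) (ζ η : h),
      ⟪η, Γ w ζ⟫ = w * ⟪G ((starRingEnd ℂ) w) η, G 0 ζ⟫ := by
    intro w hw hwc ζ η
    rw [hΓ w hw ζ, hτinner ((starRingEnd ℂ) w) hwc _ η, hAxd w hw ζ, Complex.conj_conj,
      sub_neg_eq_add]
    have hcoe : ((⟨G 0 ζ - G w ζ, hsub w hw ζ⟩ : D) : H) = G 0 ζ - G w ζ := rfl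
    rw [hcoe, ← smul_add, sub_add_cancel, inner_smul_right]
  have hccz : (starRingEnd ℂ) ((starRingEnd ℂ) z) = z := Complex.conj_conj z
  have hadj : ∀ ζ η : h, ⟪η, Γ z ζ⟫ = ⟪Γ ((starRingEnd ℂ) z) η, ζ⟫ := by
    intro ζ η
    have h1 : ⟪ζ, Γ ((starRingEnd ℂ) z) η⟫ = (starRingEnd ℂ) z * ⟪G z ζ, G 0 η⟫ := by
      have h2 := hΓadjR ((starRingEnd ℂ) z) hzc' (by rw [hccz]; exact hz') η ζ
      rwa [hccz] at h2
    rw [← inner_conj_symm (Γ ((starRingEnd ℂ) z) η) ζ, h1, map_mul, hccz, inner_conj_symm]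
    exact hΓadjL z hz' ζ η
  -- lower bound for G
  have hGlow : ∀ w : ℂ, w.im ≠ 0 → ∃ c : ℝ, 0 < c ∧ ∀ ζ : h, ‖ζ‖ ≤ c * ‖G w ζ‖ := by
    intro w hw
    have hw' : w ∈ ρA := hρ w hw
    have hwc : (starRingEnd ℂ) w ∈ ρA := hρconj w hw'
    -- the bounded operator S = τ ∘ R w̄
    set Slin : H →ₗ[ℂ] h :=
      { toFun := fun y => τ ⟨R ((starRingEnd ℂ) w) y, hmem _ hwc y⟩
        map_add' := by
          intro y₁ y₂
          rw [← map_add]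
          exact hτcongr _ _ (by simp)
        map_smul' := by
          intro c₁ y₁
          rw [RingHom.id_apply, ← map_smul]
          exact hτcongr _ _ (by simp) } with hSlin
    have hbound : ∀ y : H, ‖Slin y‖ ≤
        (max C 0 * (‖R ((starRingEnd ℂ) w)‖ + (‖w‖ * ‖R ((starRingEnd ℂ) w)‖ + 1))) * ‖y‖ := by
      intro y
      have h1 := hτ ⟨R ((starRingEnd ℂ) w) y, hmem _ hwc y⟩
      have h2 : A ⟨R ((starRingEnd ℂ) w) y, hmem _ hwc y⟩
          = (starRingEnd ℂ) w • R ((starRingEnd ℂ) w) y - y := hAR _ hwc y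
      rw [h2] at h1
      have h3 : ‖R ((starRingEnd ℂ) w) y‖ ≤ ‖R ((starRingEnd ℂ) w)‖ * ‖y‖ :=
        (R ((starRingEnd ℂ) w)).le_opNorm y
      have h4 : ‖(starRingEnd ℂ) w • R ((starRingEnd ℂ) w) y - y‖
          ≤ ‖w‖ * (‖R ((starRingEnd ℂ) w)‖ * ‖y‖) + ‖y‖ := by
        calc ‖(starRingEnd ℂ) w • R ((starRingEnd ℂ) w) y - y‖
            ≤ ‖(starRingEnd ℂ) w • R ((starRingEnd ℂ) w) y‖ + ‖y‖ := norm_sub_le _ _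
          _ = ‖w‖ * ‖R ((starRingEnd ℂ) w) y‖ + ‖y‖ := by
              rw [norm_smul, RCLike.norm_conj]
          _ ≤ ‖w‖ * (‖R ((starRingEnd ℂ) w)‖ * ‖y‖) + ‖y‖ := by
              have := mul_le_mul_of_nonneg_left h3 (norm_nonneg w)
              linarith
      have hC : C ≤ max C 0 := le_max_left _ _
      have hnn : (0:ℝ) ≤ ‖R ((starRingEnd ℂ) w) y‖
          + ‖(starRingEnd ℂ) w • R ((starRingEnd ℂ) w) y - y‖ := by positivity
      have h5 : ‖Slin y‖ ≤ max C 0 * (‖R ((starRingEnd ℂ) w) y‖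
          + ‖(starRingEnd ℂ) w • R ((starRingEnd ℂ) w) y - y‖) := by
        refine le_trans h1 (mul_le_mul_of_nonneg_right hC hnn)
      have hmax : (0:ℝ) ≤ max C 0 := le_max_right _ _
      calc ‖Slin y‖ ≤ max C 0 * (‖R ((starRingEnd ℂ) w) y‖
            + ‖(starRingEnd ℂ) w • R ((starRingEnd ℂ) w) y - y‖) := h5
        _ ≤ max C 0 * (‖R ((starRingEnd ℂ) w)‖ * ‖y‖
            + (‖w‖ * (‖R ((starRingEnd ℂ) w)‖ * ‖y‖) + ‖y‖)) := by
            refine mul_le_mul_of_nonneg_left ?_ hmax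
            linarith
        _ = (max C 0 * (‖R ((starRingEnd ℂ) w)‖ + (‖w‖ * ‖R ((starRingEnd ℂ) w)‖ + 1))) * ‖y‖ := by
            ring
    set S : H →L[ℂ] h := Slin.mkContinuous _ hbound with hS
    have hSsurj : Function.Surjective S := by
      intro ξ
      obtain ⟨x, hxτ⟩ := hτsurj ξ
      refine ⟨(starRingEnd ℂ) w • (x : H) - A x, ?_⟩
      have : S ((starRingEnd ℂ) w • (x : H) - A x)
          = τ ⟨R ((starRingEnd ℂ) w) ((starRingEnd ℂ) w • (x : H) - A x), hmem _ hwc _⟩ := rfl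
      rw [this, hτcongr _ x (hres2 _ hwc x), hxτ]
    obtain ⟨c, hc, hcp⟩ := S.exists_preimage_norm_le hSsurj
    refine ⟨c, hc, fun ζ => ?_⟩
    obtain ⟨y, hy1, hy2⟩ := hcp ζ
    have hinner : ⟪G w ζ, y⟫ = ⟪ζ, ζ⟫ := by
      rw [hG w hw' ζ y]
      show ⟪ζ, S y⟫ = ⟪ζ, ζ⟫
      rw [hy1]
    have h6 : ‖ζ‖ ^ 2 = ‖⟪ζ, ζ⟫‖ := by
      rw [inner_self_eq_norm_sq_to_K]
      simp [← Complex.ofReal_pow]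
    have h7 : ‖⟪ζ, ζ⟫‖ ≤ ‖G w ζ‖ * (c * ‖ζ‖) := by
      rw [← hinner]
      calc ‖⟪G w ζ, y⟫‖ ≤ ‖G w ζ‖ * ‖y‖ := norm_inner_le_norm _ _
        _ ≤ ‖G w ζ‖ * (c * ‖ζ‖) := mul_le_mul_of_nonneg_left hy2 (norm_nonneg _)
    rcases eq_or_ne ζ 0 with rfl | hζ
    · simp
    · have hζpos : 0 < ‖ζ‖ := norm_pos_iff.mpr hζ
      nlinarith [h6, h7, norm_nonneg (G w ζ)]
  -- facts about Pr
  have hPridem : ∀ ξ : h, Pr (Pr ξ) = Pr ξ := by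
    intro ξ
    have h1 := ContinuousLinearMap.ext_iff.mp hPrproj ξ
    simpa using h1
  have hPrfix : ∀ ξ : h, ξ ∈ Set.range ⇑Pr → Pr ξ = ξ := by
    rintro ξ ⟨u, rfl⟩; exact hPridem u
  have hPrmem : ∀ ξ : h, Pr ξ ∈ Set.range ⇑Pr := fun ξ => ⟨ξ, rfl⟩
  have hPrinner : ∀ a b : h, ⟪Pr a, b⟫ = ⟪a, Pr b⟫ := by
    intro a b
    conv_lhs => rw [← hPrsa.adjoint_eq]
    exact ContinuousLinearMap.adjoint_inner_left Pr b a
  have hDΘfix : ∀ x : DΘ, Pr (x : h) = (x : h) := fun x => hPrfix _ (hDΘ x.2)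
  -- real diagonal of Θ
  have hΘim0 : ∀ x : DΘ, (⟪(x : h), Θ x⟫).im = 0 := by
    intro x
    apply Complex.conj_eq_iff_im.mp
    rw [inner_conj_symm]
    exact hΘsym x x
  -- coercivity
  have hcoer : ∀ w : ℂ, w.im ≠ 0 → ∃ m : ℝ, 0 < m ∧ ∀ x : DΘ,
      m * ‖(x : h)‖ ≤ ‖Θ x + Pr (Γ w (Pr (x : h)))‖ := by
    intro w hw
    have hw' : w ∈ ρA := hρ w hw
    obtain ⟨c, hc, hcb⟩ := hGlow w hw
    refine ⟨|w.im| / c ^ 2, by positivity, fun x => ?_⟩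
    set ζ := (x : h) with hζdef
    have hfix : Pr ζ = ζ := hDΘfix x
    rw [hfix]
    set T := Θ x + Pr (Γ w ζ) with hT
    have him : (⟪ζ, T⟫).im = w.im * ‖G w ζ‖ ^ 2 := by
      rw [hT, inner_add_right]
      have h1 : ⟪ζ, Pr (Γ w ζ)⟫ = ⟪ζ, Γ w ζ⟫ := by
        rw [← hPrinner, hfix]
      rw [h1, Complex.add_im, hΘim0 x, zero_add]
      exact hΓim w hw' ζ
    have h2 : |w.im| * ‖G w ζ‖ ^ 2 ≤ ‖ζ‖ * ‖T‖ := by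
      have h3 : |w.im| * ‖G w ζ‖ ^ 2 = |(⟪ζ, T⟫).im| := by
        rw [him, abs_mul, abs_of_nonneg (by positivity : (0:ℝ) ≤ ‖G w ζ‖ ^ 2)]
      rw [h3]
      calc |(⟪ζ, T⟫).im| ≤ ‖⟪ζ, T⟫‖ := Complex.abs_im_le_norm _
        _ = ‖⟪ζ, T⟫‖ := rfl
        _ ≤ ‖ζ‖ * ‖T‖ := norm_inner_le_norm _ _
    have h4 : ‖ζ‖ ^ 2 ≤ c ^ 2 * ‖G w ζ‖ ^ 2 := by
      have := hcb ζ
      nlinarith [norm_nonneg ζ, norm_nonneg (G w ζ)]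
    rw [div_mul_eq_mul_div, div_le_iff₀ (by positivity : (0:ℝ) < c ^ 2)]
    rcases eq_or_ne ζ 0 with hζ0 | hζ0
    · rw [hζ0]; simp
      positivity
    · have hζpos : 0 < ‖ζ‖ := norm_pos_iff.mpr hζ0
      refine le_of_mul_le_mul_right ?_ hζpos
      nlinarith [mul_le_mul_of_nonneg_left h4 (abs_nonneg w.im),
        mul_le_mul_of_nonneg_left h2 (sq_nonneg c)]
  obtain ⟨m, hm, hcoerz⟩ := hcoer z hz
  obtain ⟨m', hm', hcoerz'⟩ := hcoer ((starRingEnd ℂ) z) hzcim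
  -- the operator T = Θ + Pr Γ_z Pr
  set Tmap : DΘ →ₗ[ℂ] h :=
    { toFun := fun x => Θ x + Pr (Γ z (Pr (x : h)))
      map_add' := by
        intro a b
        simp only [Submodule.coe_add, map_add]
        abel
      map_smul' := by
        intro c₁ a
        simp only [Submodule.coe_smul, map_smul, RingHom.id_apply, smul_add] } with hTmap
  have hTapp : ∀ x : DΘ, Tmap x = Θ x + Pr (Γ z (Pr (x : h))) := fun _ => rfl
  have hTcoer : ∀ x : DΘ, m * ‖(x : h)‖ ≤ ‖Tmap x‖ := fun x => hcoerz x
  have hTmem : ∀ x : DΘ, Tmap x ∈ Set.range ⇑Pr := by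
    intro x
    rw [hTapp]
    obtain ⟨u, hu⟩ := hΘran x
    exact ⟨u + Γ z (Pr (x : h)), by rw [map_add, hu]⟩
  have hTinj : ∀ x y : DΘ, Tmap x = Tmap y → x = y := by
    intro x y hxy
    have h1 : Tmap (x - y) = 0 := by rw [map_sub, hxy, sub_self]
    have h2 := hTcoer (x - y)
    rw [h1, norm_zero] at h2
    have h3 : ‖((x - y : DΘ) : h)‖ ≤ 0 := by nlinarith
    have h4 : ((x - y : DΘ) : h) = 0 := norm_le_zero_iff.mp h3
    exact Subtype.ext (sub_eq_zero.mp h4)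
  -- determination of Θ values
  have hdetermine : ∀ (ζ : h) (hζ : ζ ∈ DΘ) (η' : h), η' ∈ Set.range ⇑Pr →
      (∀ x : DΘ, ⟪ζ, Θ x⟫ = ⟪η', (x : h)⟫) → Θ ⟨ζ, hζ⟩ = η' := by
    intro ζ hζ η' hη' hinn
    set d := Θ ⟨ζ, hζ⟩ - η' with hd
    have hzero : ∀ x : DΘ, ⟪d, (x : h)⟫ = 0 := by
      intro x
      rw [hd, inner_sub_left]
      have h1 : ⟪Θ ⟨ζ, hζ⟩, (x : h)⟫ = ⟪ζ, Θ x⟫ := hΘsym ⟨ζ, hζ⟩ x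
      rw [h1, hinn x, sub_self]
    have hdran : d ∈ Set.range ⇑Pr := by
      obtain ⟨u, hu⟩ := hΘran ⟨ζ, hζ⟩
      obtain ⟨v, hv⟩ := hη'
      exact ⟨u - v, by rw [map_sub, hu, hv]⟩
    have hdc : d ∈ closure (DΘ : Set h) := hDΘdense hdran
    have hsubset : closure (DΘ : Set h) ⊆ {ξ : h | ⟪d, ξ⟫ = 0} := by
      apply closure_minimal
      · intro ξ hξ
        exact hzero ⟨ξ, hξ⟩
      · exact isClosed_eq (Continuous.inner continuous_const continuous_id) continuous_const
    have : ⟪d, d⟫ = (0 : ℂ) := hsubset hdc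
    have hd0 : d = 0 := inner_self_eq_zero.mp this
    exact sub_eq_zero.mp hd0
  -- range of Tmap is closed
  set N : Submodule ℂ h := LinearMap.range Tmap with hN
  have hNclosed : IsClosed (N : Set h) := by
    apply isClosed_of_closure_subset
    intro η hη
    obtain ⟨s, hsmem, hstend⟩ := mem_closure_iff_seq_limit.mp hη
    choose xs hxs using fun n => LinearMap.mem_range.mp (hsmem n)
    have hcauchy : CauchySeq (fun n => ((xs n : DΘ) : h)) := by
      rw [Metric.cauchySeq_iff]
      intro ε hε
      obtain ⟨Nn, hNn⟩ := Metric.cauchySeq_iff.mp hstend.cauchySeq (m * ε) (by positivity)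
      refine ⟨Nn, fun p hp q hq => ?_⟩
      have h1 := hTcoer (xs p - xs q)
      rw [map_sub, hxs, hxs] at h1
      have h2 : dist (s p) (s q) < m * ε := hNn p hp q hq
      rw [dist_eq_norm] at h2 ⊢
      have h3 : ((xs p - xs q : DΘ) : h) = ((xs p : DΘ) : h) - ((xs q : DΘ) : h) := rfl
      rw [h3] at h1
      nlinarith
    obtain ⟨ζ, hζtend⟩ := cauchySeq_tendsto_of_complete hcauchy
    have hζfix : Pr ζ = ζ := by
      have h1 : Filter.Tendsto (fun n => Pr ((xs n : DΘ) : h)) Filter.atTop (nhds (Pr ζ)) :=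
        (Pr.continuous.tendsto ζ).comp hζtend
      have h2 : (fun n => Pr ((xs n : DΘ) : h)) = fun n => ((xs n : DΘ) : h) := by
        funext n; exact hDΘfix (xs n)
      rw [h2] at h1
      exact tendsto_nhds_unique h1 hζtend
    set η' := η - Pr (Γ z (Pr ζ)) with hη'def
    have hΘtend : Filter.Tendsto (fun n => Θ (xs n)) Filter.atTop (nhds η') := by
      have h1 : ∀ n, Θ (xs n) = s n - Pr (Γ z (Pr ((xs n : DΘ) : h))) := by
        intro n
        have := hxs n
        rw [hTapp] at this
        linear_combination (norm := abel) this
      have h2 : Filter.Tendsto (fun n => s n - Pr (Γ z (Pr ((xs n : DΘ) : h))))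
          Filter.atTop (nhds (η - Pr (Γ z (Pr ζ)))) :=
        hstend.sub (((Pr.continuous.comp ((Γ z).continuous.comp Pr.continuous)).tendsto
          ζ).comp hζtend)
      rw [hη'def]
      simpa [h1] using h2
    have hη'ran : η' ∈ Set.range ⇑Pr := by
      have h1 : Filter.Tendsto (fun n => Pr (Θ (xs n))) Filter.atTop (nhds (Pr η')) :=
        (Pr.continuous.tendsto η').comp hΘtend
      have h2 : (fun n => Pr (Θ (xs n))) = fun n => Θ (xs n) := by
        funext n; exact hPrfix _ (hΘran (xs n))
      rw [h2] at h1
      exact ⟨η', tendsto_nhds_unique h1 hΘtend⟩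
    have hζran : ζ ∈ Set.range ⇑Pr := ⟨ζ, hζfix⟩
    have hinn : ∀ x : DΘ, ⟪ζ, Θ x⟫ = ⟪η', (x : h)⟫ := by
      intro x
      have h1 : Filter.Tendsto (fun n => ⟪((xs n : DΘ) : h), Θ x⟫)
          Filter.atTop (nhds ⟪ζ, Θ x⟫) := hζtend.inner tendsto_const_nhds
      have h2 : Filter.Tendsto (fun n => ⟪Θ (xs n), (x : h)⟫)
          Filter.atTop (nhds ⟪η', (x : h)⟫) := hΘtend.inner tendsto_const_nhds
      have h3 : (fun n => ⟪((xs n : DΘ) : h), Θ x⟫) = fun n => ⟪Θ (xs n), (x : h)⟫ := by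
        funext n; exact (hΘsym (xs n) x).symm
      rw [h3] at h1
      exact tendsto_nhds_unique h1 h2
    have hζmem : ζ ∈ DΘ := hΘsa ζ η' hζran hη'ran hinn
    have hΘval : Θ ⟨ζ, hζmem⟩ = η' := hdetermine ζ hζmem η' hη'ran hinn
    refine LinearMap.mem_range.mpr ⟨⟨ζ, hζmem⟩, ?_⟩
    rw [hTapp, hΘval, hη'def]
    abel
  -- surjectivity of Tmap onto the range of Pr
  have hTsurj : ∀ η : h, η ∈ Set.range ⇑Pr → ∃ x : DΘ, Tmap x = η := by
    intro η hηran
    haveI : CompleteSpace N := hNclosed.completeSpace_coe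
    obtain ⟨a, haN, b, hbO, hab⟩ := N.exists_add_mem_mem_orthogonal η
    obtain ⟨x₀, hx₀⟩ := LinearMap.mem_range.mp haN
    have hbran : b ∈ Set.range ⇑Pr := by
      have h1 : b = η - a := by rw [hab]; abel
      have h2 : Pr b = b := by
        rw [h1, map_sub, hPrfix η hηran, hPrfix a (by rw [← hx₀]; exact hTmem x₀)]
      exact ⟨b, h2⟩
    have hbfix : Pr b = b := hPrfix b hbran
    have hbinn : ∀ x : DΘ, ⟪b, Θ x⟫ = ⟪-(Pr (Γ ((starRingEnd ℂ) z) b)), (x : h)⟫ := by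
      intro x
      have h0 : ⟪Tmap x, b⟫ = 0 := (N.mem_orthogonal b).mp hbO (Tmap x)
        (LinearMap.mem_range.mpr ⟨x, rfl⟩)
      have h1 : ⟪b, Tmap x⟫ = 0 := by
        have h0' := congrArg (starRingEnd ℂ) h0
        simpa using h0'
      rw [hTapp, inner_add_right] at h1
      have h2 : ⟪b, Pr (Γ z (Pr (x : h)))⟫ = ⟪Γ ((starRingEnd ℂ) z) b, (x : h)⟫ := by
        rw [← hPrinner, hbfix, hDΘfix x]
        exact hadj (x : h) b
      rw [h2] at h1
      have h3 : ⟪Γ ((starRingEnd ℂ) z) b, (x : h)⟫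
          = ⟪Pr (Γ ((starRingEnd ℂ) z) b), (x : h)⟫ := by
        rw [hPrinner, hDΘfix x]
      rw [h3] at h1
      rw [inner_neg_left]
      linear_combination h1
    have hbmem : b ∈ DΘ := hΘsa b (-(Pr (Γ ((starRingEnd ℂ) z) b))) hbran
      (by
        obtain ⟨u, hu⟩ := hPrmem (Γ ((starRingEnd ℂ) z) b)
        exact ⟨-u, by rw [map_neg, hu]⟩) hbinn
    have hΘb : Θ ⟨b, hbmem⟩ = -(Pr (Γ ((starRingEnd ℂ) z) b)) :=
      hdetermine b hbmem _ (by
        obtain ⟨u, hu⟩ := hPrmem (Γ ((starRingEnd ℂ) z) b)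
        exact ⟨-u, by rw [map_neg, hu]⟩) hbinn
    have hb0 : b = 0 := by
      have h1 := hcoerz' ⟨b, hbmem⟩
      have h2 : Θ (⟨b, hbmem⟩ : DΘ) + Pr (Γ ((starRingEnd ℂ) z) (Pr ((⟨b, hbmem⟩ : DΘ) : h)))
          = 0 := by
        have hc : ((⟨b, hbmem⟩ : DΘ) : h) = b := rfl
        rw [hΘb, hc, hbfix]
        abel
      rw [h2, norm_zero] at h1
      have h3 : ‖b‖ ≤ 0 := by
        have hc : ((⟨b, hbmem⟩ : DΘ) : h) = b := rfl
        rw [hc] at h1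
        nlinarith
      exact norm_le_zero_iff.mp h3
    refine ⟨x₀, ?_⟩
    rw [hx₀, hab, hb0, add_zero]
  -- construct the inverse
  have hex : ∀ ζ : h, ∃ x : DΘ, Tmap x = Pr ζ := fun ζ => hTsurj (Pr ζ) (hPrmem ζ)
  set f : h → DΘ := fun ζ => (hex ζ).choose with hf
  have hfT : ∀ ζ : h, Tmap (f ζ) = Pr ζ := fun ζ => (hex ζ).choose_spec
  set Blin : h →ₗ[ℂ] h :=
    { toFun := fun ζ => ((f ζ : DΘ) : h)
      map_add' := by
        intro a b
        show ((f (a + b) : DΘ) : h) = ((f a : DΘ) : h) + ((f b : DΘ) : h)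
        have h1 : f (a + b) = f a + f b := by
          apply hTinj
          rw [map_add, hfT, hfT, hfT, map_add]
        rw [h1]; rfl
      map_smul' := by
        intro c₁ a
        show ((f (c₁ • a) : DΘ) : h) = c₁ • ((f a : DΘ) : h)
        have h1 : f (c₁ • a) = c₁ • f a := by
          apply hTinj
          rw [map_smul, hfT, hfT, map_smul]
        rw [h1]; rfl } with hBlin
  have hBbound : ∀ ζ : h, ‖Blin ζ‖ ≤ (‖Pr‖ / m) * ‖ζ‖ := by
    intro ζ
    have h1 := hTcoer (f ζ)
    rw [hfT] at h1
    have h2 : ‖Pr ζ‖ ≤ ‖Pr‖ * ‖ζ‖ := Pr.le_opNorm ζ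
    have h3 : ‖Blin ζ‖ = ‖((f ζ : DΘ) : h)‖ := rfl
    rw [h3, div_mul_eq_mul_div, le_div_iff₀ hm]
    nlinarith
  set B : h →L[ℂ] h := Blin.mkContinuous _ hBbound with hB
  have hBapp : ∀ ζ : h, B ζ = ((f ζ : DΘ) : h) := fun _ => rfl
  have hBmem : ∀ ζ : h, B ζ ∈ DΘ := by
    intro ζ
    rw [hBapp]
    exact (f ζ).2
  refine ⟨B, hBmem, ?_, ?_⟩
  · intro ζ hζ
    have h1 : (⟨B ζ, hBmem ζ⟩ : DΘ) = f ζ := Subtype.ext (hBapp ζ)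
    have h2 : Θ (⟨B ζ, hBmem ζ⟩ : DΘ) + Pr (Γ z (Pr (B ζ)))
        = Tmap (⟨B ζ, hBmem ζ⟩ : DΘ) := rfl
    rw [h2, h1, hfT, hPrfix ζ hζ]
  · intro x
    have h1 : Θ x + Pr (Γ z (Pr (x : h))) = Tmap x := rfl
    rw [h1]
    have h2 : f (Tmap x) = x := by
      apply hTinj
      rw [hfT, hPrfix _ (hTmem x)]
    rw [hBapp, h2]
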